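/- Let G(M) = (N, X, π) be the bottleneck congestion game corresponding to a congestion model M = (N, F, X, (c_f)_{f∈F}), and define ψ : X → ℝ≥0^{n·m} by ψ_{i,f}(x) = c_f(x) if f ∈ x_i and ψ_{i,f}(x) = 0 otherwise. Then for every improving move (x, (y_S, x_{−S})) of any nonempty coalition S ⊆ N, ψ(y_S, x_{−S}) is strictly sorted-lexicographically smaller than ψ(x). -/

import Mathlib

open Finset

/-- The vector `a` sorted in non-increasing order. -/
noncomputable def sortDesc {α : Type*} [LinearOrder α] {q : ℕ} (a : Fin q → α) : Fin q → α :=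
  fun i => a (Tuple.sort a i.rev)

/-- `a` is strictly sorted-lexicographically smaller than `b`. -/
def SLexLt {α : Type*} [LinearOrder α] {q : ℕ} (a b : Fin q → α) : Prop :=
  ∃ m : Fin q, (∀ i, i < m → sortDesc a i = sortDesc b i) ∧ sortDesc a m < sortDesc b m

/-- Sorted-lexicographic comparison of vectors indexed by an arbitrary finite type. -/
def SLexLtOn {α : Type*} [LinearOrder α] {ι : Type*} [Fintype ι] (a b : ι → α) : Prop :=
  SLexLt (a ∘ (Fintype.equivFin ι).symm) (b ∘ (Fintype.equivFin ι).symm)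

/-- An improving move: some nonempty coalition `S` deviates (players outside `S`
keep their strategies) and every member of `S` strictly decreases her cost. -/
def ImprovingMove {ι : Type*} {X : ι → Type*} {β : Type*} [Preorder β]
    (π : (∀ i, X i) → ι → β) (x y : ∀ i, X i) : Prop :=
  ∃ S : Finset ι, S.Nonempty ∧ (∀ i ∉ S, y i = x i) ∧ ∀ i ∈ S, π y i < π x i


noncomputable def cntGe {q : ℕ} (a : Fin q → ℝ) (w : ℝ) : ℕ :=
  (univ.filter fun i => w ≤ a i).card

lemma sortDesc_anti {q : ℕ} (a : Fin q → ℝ) : Antitone (sortDesc a) := by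
  intro i j hij
  exact Tuple.monotone_sort a (Fin.rev_le_rev.mpr hij)

lemma mem_iff_lt_card {q : ℕ} (s : Finset (Fin q))
    (hs : ∀ ⦃k j : Fin q⦄, k ∈ s → j ≤ k → j ∈ s) (i : Fin q) :
    i ∈ s ↔ (i : ℕ) < s.card := by
  constructor
  · intro hi
    have h1 : Finset.Iic i ⊆ s := fun j hj => hs hi (Finset.mem_Iic.mp hj)
    have := Finset.card_le_card h1
    rw [Fin.card_Iic] at this; omega
  · intro hi
    by_contra hns
    have h2 : s ⊆ Finset.Iio i := fun j hj =>
      Finset.mem_Iio.mpr (lt_of_not_ge fun h => hns (hs hj h))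
    have := Finset.card_le_card h2
    rw [Fin.card_Iio] at this; omega

lemma cntGe_sortDesc {q : ℕ} (a : Fin q → ℝ) (w : ℝ) : cntGe (sortDesc a) w = cntGe a w := by
  unfold cntGe
  apply Finset.card_equiv (Fin.revPerm.trans (Tuple.sort a))
  intro i
  simp only [mem_filter, mem_univ, true_and]
  simp [sortDesc, Fin.revPerm]

lemma cntGe_mono {q : ℕ} (a : Fin q → ℝ) {w w' : ℝ} (h : w ≤ w') : cntGe a w' ≤ cntGe a w := by
  apply Finset.card_le_card
  intro i hi
  simp only [mem_filter, mem_univ, true_and] at hi ⊢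
  linarith

lemma cntGe_le {q : ℕ} (a : Fin q → ℝ) (w : ℝ) : cntGe a w ≤ q := by
  simpa [cntGe] using (Finset.card_filter_le univ fun i => w ≤ a i).trans (by simp)

lemma sortDesc_ge_iff {q : ℕ} (a : Fin q → ℝ) (w : ℝ) (i : Fin q) :
    w ≤ sortDesc a i ↔ (i : ℕ) < cntGe a w := by
  have hl : ∀ ⦃k j : Fin q⦄, k ∈ univ.filter (fun t => w ≤ sortDesc a t) → j ≤ k →
      j ∈ univ.filter (fun t => w ≤ sortDesc a t) := by
    intro k j hk hjk
    simp only [mem_filter, mem_univ, true_and] at hk ⊢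
    exact le_trans hk (sortDesc_anti a hjk)
  have h := mem_iff_lt_card _ hl i
  simp only [mem_filter, mem_univ, true_and] at h
  have h2 : (univ.filter (fun t => w ≤ sortDesc a t)).card = cntGe a w := cntGe_sortDesc a w
  rwa [h2] at h

lemma slexLt_of_cnt {q : ℕ} (a b : Fin q → ℝ) (v : ℝ)
    (hgt : ∀ w, v < w → cntGe a w = cntGe b w) (hv : cntGe a v < cntGe b v) :
    SLexLt a b := by
  have hq : cntGe a v < q := lt_of_lt_of_le hv (cntGe_le b v)
  refine ⟨⟨cntGe a v, hq⟩, ?_, ?_⟩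
  · intro i hi
    have hi' : (i : ℕ) < cntGe a v := hi
    apply le_antisymm
    · set w := sortDesc a i with hws
      have hw : (i : ℕ) < cntGe a w := (sortDesc_ge_iff a w i).mp le_rfl
      rcases le_or_gt w v with h | h
      · have h3 : (i : ℕ) < cntGe b w :=
          lt_of_lt_of_le (lt_of_lt_of_le hi' (le_of_lt hv)) (cntGe_mono b h)
        exact (sortDesc_ge_iff b w i).mpr h3
      · exact (sortDesc_ge_iff b w i).mpr (by rw [← hgt w h]; exact hw)
    · set w := sortDesc b i with hws
      have hw : (i : ℕ) < cntGe b w := (sortDesc_ge_iff b w i).mp le_rfl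
      rcases le_or_gt w v with h | h
      · exact (sortDesc_ge_iff a w i).mpr (lt_of_lt_of_le hi' (cntGe_mono a h))
      · exact (sortDesc_ge_iff a w i).mpr (by rw [hgt w h]; exact hw)
  · have h1 : v ≤ sortDesc b ⟨cntGe a v, hq⟩ := (sortDesc_ge_iff b v _).mpr hv
    have h2 : ¬ v ≤ sortDesc a ⟨cntGe a v, hq⟩ := fun h => by
      have := (sortDesc_ge_iff a v _).mp h
      simp at this
    exact lt_of_lt_of_le (lt_of_not_ge h2) h1

lemma slexLtOn_of_cnt {ι : Type*} [Fintype ι] (a b : ι → ℝ) (v : ℝ)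
    
    (hgt : ∀ w, v < w → (univ.filter fun i => w ≤ a i).card = (univ.filter fun i => w ≤ b i).card)
    (hv : (univ.filter fun i => v ≤ a i).card < (univ.filter fun i => v ≤ b i).card) :
    SLexLtOn a b := by
  classical
  set e := Fintype.equivFin ι
  have key : ∀ (f : ι → ℝ) (w : ℝ),
      cntGe (f ∘ e.symm) w = (univ.filter fun i => w ≤ f i).card := by
    intro f w
    unfold cntGe
    exact Finset.card_equiv e.symm (by simp)
  apply slexLt_of_cnt _ _ v
  · intro w hw; rw [key, key]; exact hgt w hw
  · rw [key, key]; exact hv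

/-- In a bottleneck congestion game, the function
`ψ_{i,f}(x) = c_f(x)` if `f ∈ x_i` and `0` otherwise strictly decreases in the
sorted lexicographical order along every improving move. -/
theorem stmt_12 {ι F : Type*} [Fintype ι] [Nonempty ι] [Fintype F] [DecidableEq F]
    (Xi : ι → Finset (Finset F)) (hXi : ∀ i, (Xi i).Nonempty)
    (hstrat : ∀ i, ∀ s ∈ Xi i, s.Nonempty)
    (c : F → (ι → Finset F) → ℝ)
    (hnn : ∀ (f : F) (x : ι → Finset F), (∀ i, x i ∈ Xi i) → 0 ≤ c f x)
    (hiic : ∀ (f : F) (x y : ι → Finset F), (∀ i, x i ∈ Xi i) → (∀ i, y i ∈ Xi i) →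
      (∀ i, f ∈ x i ↔ f ∈ y i) → c f x = c f y)
    (hmono : ∀ (f : F) (x y : ι → Finset F), (∀ i, x i ∈ Xi i) → (∀ i, y i ∈ Xi i) →
      (∀ i, f ∈ x i → f ∈ y i) → c f x ≤ c f y)
    (π : (ι → Finset F) → ι → ℝ)
    (hπ : ∀ (x : ι → Finset F) (hx : ∀ j, x j ∈ Xi j) (i : ι),
      π x i = (x i).sup' (hstrat i (x i) (hx i)) (fun f => c f x)) :
    ∀ x y : ι → Finset F, (∀ i, x i ∈ Xi i) → (∀ i, y i ∈ Xi i) →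
      ImprovingMove π x y →
      SLexLtOn (fun p : ι × F => if p.2 ∈ y p.1 then c p.2 y else 0)
        (fun p : ι × F => if p.2 ∈ x p.1 then c p.2 x else 0) := by
  intro x y hx hy hmov
  obtain ⟨S, hSne, hoff, himp⟩ := hmov
  classical
  set a : ι × F → ℝ := fun p => if p.2 ∈ y p.1 then c p.2 y else 0 with ha
  set b : ι × F → ℝ := fun p => if p.2 ∈ x p.1 then c p.2 x else 0 with hb
  have hna : ∀ p, 0 ≤ a p := by
    intro p; simp only [ha]; split
    · exact hnn _ y hy
    · exact le_refl 0
  have hnb : ∀ p, 0 ≤ b p := by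
    intro p; simp only [hb]; split
    · exact hnn _ x hx
    · exact le_refl 0
  -- basic π facts
  have hcley : ∀ j f, f ∈ y j → c f y ≤ π y j := by
    intro j f hf; rw [hπ y hy j]; exact Finset.le_sup' (fun f => c f y) hf
  have hπy_nonneg : ∀ j, 0 ≤ π y j := by
    intro j
    obtain ⟨f, hf⟩ := hstrat j (y j) (hy j)
    exact le_trans (hnn f y hy) (hcley j f hf)
  have attain : ∀ j, ∃ g ∈ x j, c g x = π x j := by
    intro j
    obtain ⟨g, hg, hge⟩ := Finset.exists_mem_eq_sup' (hstrat j (x j) (hx j)) (fun f => c f x)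
    exact ⟨g, hg, by rw [hπ x hx j, hge]⟩
  -- the set of changed entries
  set Ch : Finset (ι × F) := univ.filter fun p => a p ≠ b p with hCdef
  have memCh : ∀ p, p ∈ Ch ↔ a p ≠ b p := by intro p; simp [hCdef]
  obtain ⟨i0, hi0⟩ := hSne
  have hCh : Ch.Nonempty := by
    by_contra h
    have hall : ∀ p, a p = b p := by
      intro p; by_contra hne
      exact h ⟨p, (memCh p).mpr hne⟩
    obtain ⟨g, hg, hgx⟩ := attain i0
    have hbg : b (i0, g) = c g x := if_pos hg
    have h1 : a (i0, g) = π x i0 := by rw [hall (i0, g), hbg, hgx]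
    by_cases hgy : g ∈ y i0
    · have : a (i0, g) = c g y := if_pos hgy
      rw [this] at h1
      have := hcley i0 g hgy
      have := himp i0 hi0
      linarith
    · have : a (i0, g) = 0 := if_neg hgy
      rw [this] at h1
      have := himp i0 hi0
      have := hπy_nonneg i0
      linarith
  set v : ℝ := Ch.sup' hCh (fun p => max (a p) (b p)) with hvdef
  have hva : ∀ p ∈ Ch, a p ≤ v := fun p hp =>
    le_trans (le_max_left _ _) (Finset.le_sup' (fun p => max (a p) (b p)) hp)
  have hvb : ∀ p ∈ Ch, b p ≤ v := fun p hp =>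
    le_trans (le_max_right _ _) (Finset.le_sup' (fun p => max (a p) (b p)) hp)
  have hvpos : 0 < v := by
    obtain ⟨p0, hp0⟩ := hCh
    by_contra hc
    push_neg at hc
    have h1 : a p0 = 0 := le_antisymm (le_trans (hva p0 hp0) hc) (hna p0)
    have h2 : b p0 = 0 := le_antisymm (le_trans (hvb p0 hp0) hc) (hnb p0)
    exact (memCh p0).mp hp0 (h1.trans h2.symm)
  -- main claim: changed entries of the new vector are strictly below v
  have hlt : ∀ p ∈ Ch, a p < v := by
    rintro ⟨i, f⟩ hp
    have hab : a (i, f) ≠ b (i, f) := (memCh _).mp hp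
    by_cases hfy : f ∈ y i
    case neg =>
      have : a (i, f) = 0 := if_neg hfy
      rw [this]; exact hvpos
    have haf : a (i, f) = c f y := if_pos hfy
    by_cases hjoin : ∃ j, f ∈ y j ∧ f ∉ x j
    · obtain ⟨j, hjy, hjx⟩ := hjoin
      have hjS : j ∈ S := by
        by_contra hjS
        rw [hoff j hjS] at hjy; exact hjx hjy
      have h1 : c f y ≤ π y j := hcley j f hjy
      have h2 : π y j < π x j := himp j hjS
      obtain ⟨g, hg, hgx⟩ := attain j
      have hbq : b (j, g) = c g x := if_pos hg
      have haq : a (j, g) ≤ π y j := by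
        simp only [ha]; split
        · exact hcley j g (by assumption)
        · exact hπy_nonneg j
      have hq : (j, g) ∈ Ch := by
        apply (memCh _).mpr
        intro heq
        rw [heq, hbq, hgx] at haq
        linarith
      have h3 : π x j ≤ v := by rw [← hgx, ← hbq]; exact hvb _ hq
      rw [haf]; linarith
    · push_neg at hjoin
      have hfx : f ∈ x i := hjoin i hfy
      have hle : c f y ≤ c f x := hmono f y x hy hx hjoin
      have hbf : b (i, f) = c f x := if_pos hfx
      have hne : c f y ≠ c f x := by rw [haf, hbf] at hab; exact hab
      have h4 : a (i, f) < b (i, f) := by rw [haf, hbf]; exact lt_of_le_of_ne hle hne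
      exact lt_of_lt_of_le h4 (hvb _ hp)
  -- the max is attained at a b-entry
  obtain ⟨p0, hp0, hv0⟩ := Finset.exists_mem_eq_sup' hCh (fun p => max (a p) (b p))
  have hbp0 : b p0 = v := by
    rcases max_cases (a p0) (b p0) with ⟨hm, hge⟩ | ⟨hm, _⟩
    · exfalso
      have : v = a p0 := by rw [hvdef, hv0, hm]
      have := hlt p0 hp0
      linarith
    · rw [hvdef, hv0, hm]
  -- conclude
  apply slexLtOn_of_cnt _ _ v
  · intro w hw
    congr 1
    apply Finset.filter_congr
    intro p _
    have hunch : a p = b p ∨ (a p < v ∧ b p ≤ v) := by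
      by_cases hc : p ∈ Ch
      · exact Or.inr ⟨hlt p hc, hvb p hc⟩
      · left; by_contra hne; exact hc ((memCh p).mpr hne)
    rcases hunch with h | ⟨h1, h2⟩
    · rw [h]
    · constructor
      · intro h; linarith
      · intro h; linarith
  · apply Finset.card_lt_card
    rw [Finset.ssubset_iff_of_subset]
    · refine ⟨p0, ?_, ?_⟩
      · simp only [mem_filter, mem_univ, true_and]; rw [hbp0]
      · simp only [mem_filter, mem_univ, true_and, not_le]
        exact hlt p0 hp0
    · intro p hp
      simp only [mem_filter, mem_univ, true_and] at hp ⊢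
      have : a p = b p := by
        by_contra hne
        have := hlt p ((memCh p).mpr hne)
        linarith
      linarith
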